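/- Let A ∈ GL(2,ℝ) with |det A| < 1 (dissipative) and suppose there exists a unit vector v and a unit vector direction such that |det A^k| / ‖A^k v‖² = 1 for all k ∈ ℤ (v is a critical direction of the periodic orbit given by A). Then all eigenvalues of A have the same modulus, and this common modulus is strictly less than 1; in particular, the periodic point is attracting. -/

import Mathlib

noncomputable section

private abbrev E2 := EuclideanSpace ℝ (Fin 2)

private def bE : Module.Basis (Fin 2) ℝ E2 := (EuclideanSpace.basisFun (Fin 2) ℝ).toBasis

private lemma aux_det_formula (x y : E2) :
    bE.det ![x, y] = x 0 * y 1 - x 1 * y 0 := by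
  rw [Module.Basis.det_apply, Matrix.det_fin_two]
  simp [bE, Module.Basis.toMatrix_apply]
  ring

private lemma aux_coord (x : E2) (i : Fin 2) : |x i| ≤ ‖x‖ := by
  rw [EuclideanSpace.norm_eq, ← Real.sqrt_sq_eq_abs]
  apply Real.sqrt_le_sqrt
  have : x i ^ 2 ≤ ∑ j, x j ^ 2 :=
    Finset.single_le_sum (f := fun j => x j ^ 2) (fun j _ => sq_nonneg _) (Finset.mem_univ i)
  simpa using this

private lemma aux_bound (x y : E2) :
    |bE.det ![x, y]| ≤ 2 * (‖x‖ * ‖y‖) := by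
  rw [aux_det_formula]
  have h1 : |x 0 * y 1 - x 1 * y 0| ≤ |x 0| * |y 1| + |x 1| * |y 0| := by
    calc |x 0 * y 1 - x 1 * y 0| ≤ |x 0 * y 1| + |x 1 * y 0| := abs_sub _ _
    _ = |x 0| * |y 1| + |x 1| * |y 0| := by rw [abs_mul, abs_mul]
  have h2 : |x 0| * |y 1| ≤ ‖x‖ * ‖y‖ :=
    mul_le_mul (aux_coord x 0) (aux_coord y 1) (abs_nonneg _) (norm_nonneg _)
  have h3 : |x 1| * |y 0| ≤ ‖x‖ * ‖y‖ :=
    mul_le_mul (aux_coord x 1) (aux_coord y 0) (abs_nonneg _) (norm_nonneg _)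
  linarith

private lemma aux_comp (f : E2 →ₗ[ℝ] E2) (x y : E2) :
    bE.det ![f x, f y] = LinearMap.det f * bE.det ![x, y] := by
  have h : (f ∘ ![x, y]) = ![f x, f y] := by
    funext i; fin_cases i <;> rfl
  rw [← h, Module.Basis.det_comp]

private lemma aux_eigen (A : E2 ≃ₗ[ℝ] E2) (μ : ℝ) (w : E2) (hμ : μ ≠ 0)
    (hw : A w = μ • w) : ∀ k : ℤ, (A ^ k) w = μ ^ k • w := by
  have hinv : A.symm w = μ⁻¹ • w := by
    apply A.injective
    rw [A.apply_symm_apply, map_smul, hw, smul_smul, inv_mul_cancel₀ hμ, one_smul]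
  intro k
  induction k using Int.induction_on with
  | zero => simp
  | succ n ih =>
      rw [zpow_add_one, show (A ^ (n : ℤ) * A) w = (A ^ (n : ℤ)) (A w) from rfl, hw,
        map_smul, ih, smul_smul, zpow_add_one₀ hμ, mul_comm]
  | pred n ih =>
      rw [zpow_sub_one, show (A ^ (-n : ℤ) * A⁻¹) w = (A ^ (-n : ℤ)) (A⁻¹ w) from rfl,
        show (A⁻¹ : E2 ≃ₗ[ℝ] E2) w = A.symm w from rfl, hinv,
        map_smul, ih, smul_smul, zpow_sub_one₀ hμ, mul_comm]

/-- A critical periodic point of a dissipative diffeomorphism is attracting: if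
`|det A| < 1` and some unit vector `v` satisfies `|det A^k| / ‖A^k v‖² = 1` for all
`k ∈ ℤ`, then every real eigenvalue of `A` has modulus `√|det A|`, which is `< 1`. -/
theorem stmt13 (A : EuclideanSpace ℝ (Fin 2) ≃ₗ[ℝ] EuclideanSpace ℝ (Fin 2))
    (hdiss : |LinearMap.det
      ((A : EuclideanSpace ℝ (Fin 2) →ₗ[ℝ] EuclideanSpace ℝ (Fin 2)))| < 1)
    (hcrit : ∃ v : EuclideanSpace ℝ (Fin 2), ‖v‖ = 1 ∧
      ∀ k : ℤ,
        |LinearMap.det ((A ^ k : EuclideanSpace ℝ (Fin 2) ≃ₗ[ℝ] EuclideanSpace ℝ (Fin 2)) :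
            EuclideanSpace ℝ (Fin 2) →ₗ[ℝ] EuclideanSpace ℝ (Fin 2))| / ‖(A ^ k) v‖ ^ 2 = 1) :
    (∀ (μ : ℝ) (w : EuclideanSpace ℝ (Fin 2)), w ≠ 0 → A w = μ • w →
      |μ| = Real.sqrt |LinearMap.det
        ((A : EuclideanSpace ℝ (Fin 2) →ₗ[ℝ] EuclideanSpace ℝ (Fin 2)))|) ∧
    Real.sqrt |LinearMap.det
      ((A : EuclideanSpace ℝ (Fin 2) →ₗ[ℝ] EuclideanSpace ℝ (Fin 2)))| < 1 := by
  obtain ⟨v, hv1, hv⟩ := hcrit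
  set d : ℝ := |LinearMap.det
      ((A : EuclideanSpace ℝ (Fin 2) →ₗ[ℝ] EuclideanSpace ℝ (Fin 2)))| with hd_def
  have hdu : LinearMap.det ((A : E2 →ₗ[ℝ] E2)) ≠ 0 := by
    have h := A.isUnit_det'
    exact h.ne_zero
  have hd0 : 0 < d := abs_pos.mpr hdu
  set s : ℝ := Real.sqrt d with hs_def
  have hs0 : 0 < s := Real.sqrt_pos.mpr hd0
  have hs2 : s ^ 2 = d := Real.sq_sqrt hd0.le
  -- determinant of iterates
  have hdetk : ∀ k : ℤ, |LinearMap.det ((A ^ k : E2 ≃ₗ[ℝ] E2) : E2 →ₗ[ℝ] E2)| = d ^ k := by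
    intro k
    calc |LinearMap.det ((A ^ k : E2 ≃ₗ[ℝ] E2) : E2 →ₗ[ℝ] E2)|
        = |((LinearEquiv.det (A ^ k) : ℝˣ) : ℝ)| := by rw [LinearEquiv.coe_det]
      _ = |(((LinearEquiv.det A) ^ k : ℝˣ) : ℝ)| := by rw [map_zpow]
      _ = |((LinearEquiv.det A : ℝˣ) : ℝ) ^ k| := by rw [Units.val_zpow_eq_zpow_val]
      _ = |((LinearEquiv.det A : ℝˣ) : ℝ)| ^ k := map_zpow₀ absHom _ _
      _ = d ^ k := by rw [LinearEquiv.coe_det]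
  -- norm of iterates of v
  have hnk : ∀ k : ℤ, ‖(A ^ k) v‖ = s ^ k := by
    intro k
    have h := hv k
    rw [hdetk k] at h
    have hne : ‖(A ^ k) v‖ ^ 2 ≠ 0 := by
      intro h0; rw [h0, div_zero] at h; norm_num at h
    have h2 : ‖(A ^ k) v‖ ^ 2 = d ^ k := ((div_eq_one_iff_eq hne).mp h).symm
    have hsq : (s ^ k) ^ 2 = d ^ k := by
      rw [← zpow_natCast (s ^ k) 2, ← zpow_mul, mul_comm, zpow_mul, zpow_natCast, hs2]
    calc ‖(A ^ k) v‖ = Real.sqrt (‖(A ^ k) v‖ ^ 2) := (Real.sqrt_sq (norm_nonneg _)).symm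
      _ = Real.sqrt ((s ^ k) ^ 2) := by rw [h2, hsq]
      _ = s ^ k := Real.sqrt_sq (zpow_nonneg hs0.le k)
  constructor
  · intro μ w hw0 hAw
    have hμ0 : μ ≠ 0 := by
      intro h
      apply hw0
      have h1 : A w = 0 := by rw [hAw, h, zero_smul]
      have := A.injective (by rw [h1, map_zero] : A w = A 0)
      exact this
    have hAk := aux_eigen A μ w hμ0 hAw
    have hwn : ∀ k : ℤ, ‖(A ^ k) w‖ = |μ| ^ k * ‖w‖ := by
      intro k
      rw [hAk k, norm_smul, Real.norm_eq_abs, show |μ ^ k| = |μ| ^ k from map_zpow₀ absHom μ k]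
    by_cases hdep : bE.det ![v, w] = 0
    · -- v and w are parallel: v is itself an eigenvector
      have hform := aux_det_formula v w
      rw [hdep] at hform
      have hvne : v ≠ 0 := by
        intro h; rw [h] at hv1; simp at hv1
      have hvi : v 0 ≠ 0 ∨ v 1 ≠ 0 := by
        by_contra hc
        push_neg at hc
        apply hvne
        refine PiLp.ext fun i => ?_
        fin_cases i
        · exact hc.1
        · exact hc.2
      obtain ⟨t, ht0, htw⟩ : ∃ t : ℝ, t ≠ 0 ∧ w = t • v := by
        rcases hvi with h0 | h1
        · refine ⟨w 0 / v 0, ?_, ?_⟩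
          · intro h
            apply hw0
            have hw00 : w 0 = 0 := by field_simp at h; simpa using h
            have hw10 : w 1 = 0 := by
              have : v 0 * w 1 = v 1 * w 0 := by linarith
              rw [hw00, mul_zero] at this
              exact (mul_eq_zero.mp this).resolve_left h0
            refine PiLp.ext fun i => ?_; fin_cases i
            · exact hw00
            · exact hw10
          · refine PiLp.ext fun i => ?_; fin_cases i
            · show w 0 = w 0 / v 0 * v 0
              field_simp
            · show w 1 = w 0 / v 0 * v 1
              field_simp
              nlinarith [hform]
        · refine ⟨w 1 / v 1, ?_, ?_⟩
          · intro h
            apply hw0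
            have hw10 : w 1 = 0 := by field_simp at h; simpa using h
            have hw00 : w 0 = 0 := by
              have : v 0 * w 1 = v 1 * w 0 := by linarith
              rw [hw10, mul_zero] at this
              exact (mul_eq_zero.mp this.symm).resolve_left h1
            refine PiLp.ext fun i => ?_; fin_cases i
            · exact hw00
            · exact hw10
          · refine PiLp.ext fun i => ?_; fin_cases i
            · show w 0 = w 1 / v 1 * v 0
              field_simp
              nlinarith [hform]
            · show w 1 = w 1 / v 1 * v 1
              field_simp
      have hAv : A v = μ • v := by
        have h1 : A w = μ • w := hAw
        rw [htw, map_smul] at h1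
        have h2 : t • A v = t • (μ • v) := by
          rw [h1]; exact smul_comm μ t v
        exact smul_right_injective _ ht0 h2
      have h1 := hnk 1
      rw [zpow_one, zpow_one, hAv, norm_smul, Real.norm_eq_abs, hv1, mul_one] at h1
      exact h1
    · -- v and w independent: area argument
      set c : ℝ := |bE.det ![v, w]| with hc_def
      have hc0 : 0 < c := abs_pos.mpr hdep
      have hwpos : 0 < ‖w‖ := norm_pos_iff.mpr hw0
      set r : ℝ := |μ| / s with hr_def
      have hr0 : 0 < r := div_pos (abs_pos.mpr hμ0) hs0
      have key : ∀ k : ℤ, c ≤ 2 * ‖w‖ * r ^ k := by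
        intro k
        have h1 : bE.det ![(A ^ k) v, (A ^ k) w]
            = LinearMap.det ((A ^ k : E2 ≃ₗ[ℝ] E2) : E2 →ₗ[ℝ] E2) * bE.det ![v, w] := by
          exact aux_comp ((A ^ k : E2 ≃ₗ[ℝ] E2) : E2 →ₗ[ℝ] E2) v w
        have h2 : d ^ k * c = |bE.det ![(A ^ k) v, (A ^ k) w]| := by
          rw [h1, abs_mul, hdetk k]
        have h3 : |bE.det ![(A ^ k) v, (A ^ k) w]| ≤ 2 * (‖(A ^ k) v‖ * ‖(A ^ k) w‖) :=
          aux_bound _ _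
        rw [hnk k, hwn k] at h3
        have h4 : d ^ k * c ≤ 2 * (s ^ k * (|μ| ^ k * ‖w‖)) := h2 ▸ h3
        have hsk : (0 : ℝ) < s ^ k := zpow_pos hs0 k
        have e1 : d ^ k = s ^ k * s ^ k := by
          rw [← hs2, sq, mul_zpow]
        have e2 : r ^ k = |μ| ^ k / s ^ k := div_zpow _ _ _
        rw [e2, ← mul_div_assoc, le_div_iff₀ hsk]
        have h5 : s ^ k * (c * s ^ k) ≤ s ^ k * (2 * (‖w‖ * |μ| ^ k)) := by
          calc s ^ k * (c * s ^ k) = (s ^ k * s ^ k) * c := by ring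
            _ ≤ 2 * (s ^ k * (|μ| ^ k * ‖w‖)) := by rw [← e1]; exact h4
            _ = s ^ k * (2 * (‖w‖ * |μ| ^ k)) := by ring
        have h6 := le_of_mul_le_mul_left h5 hsk
        calc c * s ^ k ≤ 2 * (‖w‖ * |μ| ^ k) := by
              have : c * s ^ k ≤ 2 * (‖w‖ * |μ| ^ k) := by nlinarith [h6, hsk]
              exact this
          _ = 2 * ‖w‖ * |μ| ^ k := by ring
      have hrone : r = 1 := by
        by_contra hne
        rcases lt_or_gt_of_ne hne with hlt | hgt
        · obtain ⟨n, hn⟩ := exists_pow_lt_of_lt_one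
            (div_pos hc0 (by positivity : (0:ℝ) < 2 * ‖w‖)) hlt
          have hk := key (n : ℤ)
          rw [zpow_natCast] at hk
          have : 2 * ‖w‖ * r ^ n < c := by
            have := (lt_div_iff₀ (by positivity : (0:ℝ) < 2 * ‖w‖)).mp hn
            linarith
          linarith
        · have hinv1 : r⁻¹ < 1 := inv_lt_one_of_one_lt₀ hgt
          obtain ⟨n, hn⟩ := exists_pow_lt_of_lt_one
            (div_pos hc0 (by positivity : (0:ℝ) < 2 * ‖w‖)) hinv1
          have hk := key (-(n : ℤ))
          rw [zpow_neg, ← inv_zpow, zpow_natCast] at hk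
          have : 2 * ‖w‖ * r⁻¹ ^ n < c := by
            have := (lt_div_iff₀ (by positivity : (0:ℝ) < 2 * ‖w‖)).mp hn
            linarith
          linarith
      rw [hr_def] at hrone
      exact (div_eq_one_iff_eq hs0.ne').mp hrone
  · calc s = Real.sqrt d := hs_def
      _ < Real.sqrt 1 := Real.sqrt_lt_sqrt (abs_nonneg _) hdiss
      _ = 1 := Real.sqrt_one
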